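/- A sequence (a(n)) with values in a field K is k-projective if and only if there exist an integer d and a family of sequences a_{y,l}(n) (for y ≥ 0, 1 ≤ l ≤ d) with a_{0,1} = a, together with d×d matrices C_{j,y} over K (for 0 ≤ j ≤ k−1, y ≥ 0), such that for all j, y and all l, the Cartier operator Δ_j applied to the vector of sequences (a_{y,1}, …, a_{y,d}) equals C_{j,y} times the vector (a_{y+1,1}, …, a_{y+1,d}), where Δ_j(b)(n) := b(kn+j). -/

import Mathlib

def kProjective (k : ℕ) (K : Type*) [Field K] (a : ℕ → K) : Prop :=
  ∃ d : ℕ, ∀ e : ℕ, ∃ g : Fin d → (ℕ → K),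
    ∀ j < k ^ e, (fun n => a (k ^ e * n + j)) ∈ Submodule.span K (Set.range g)

section Aux

variable {K : Type*} [Field K] {k : ℕ}

/-- The Cartier operator as a linear map. -/
noncomputable def cartierL (K : Type*) [Field K] (k j : ℕ) : (ℕ → K) →ₗ[K] (ℕ → K) :=
  LinearMap.funLeft K K (fun n => k * n + j)

/-- The span of level-`y` subsequences of `a`. -/
def levelSpan (K : Type*) [Field K] (k : ℕ) (a : ℕ → K) (y : ℕ) : Submodule K (ℕ → K) :=
  Submodule.span K {f | ∃ j < k ^ y, f = fun n => a (k ^ y * n + j)}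

lemma a_mem_levelSpan (a : ℕ → K) : a ∈ levelSpan K k a 0 := by
  apply Submodule.subset_span
  refine ⟨0, by norm_num, ?_⟩
  funext n; simp

lemma cartier_levelSpan (a : ℕ → K) {j : ℕ} (hj : j < k) (y : ℕ)
    {f : ℕ → K} (hf : f ∈ levelSpan K k a y) :
    cartierL K k j f ∈ levelSpan K k a (y + 1) := by
  have : Submodule.map (cartierL K k j) (levelSpan K k a y) ≤ levelSpan K k a (y + 1) := by
    rw [levelSpan, Submodule.map_span, Submodule.span_le]
    rintro _ ⟨_, ⟨i, hi, rfl⟩, rfl⟩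
    apply Submodule.subset_span
    refine ⟨k ^ y * j + i, ?_, ?_⟩
    · calc k ^ y * j + i < k ^ y * j + k ^ y := by omega
        _ = k ^ y * (j + 1) := by ring
        _ ≤ k ^ y * k := Nat.mul_le_mul_left _ hj
        _ = k ^ (y + 1) := by ring
    · funext n
      simp only [cartierL, LinearMap.funLeft_apply]
      congr 1
      ring
  exact this ⟨f, hf, rfl⟩

end Aux

/-- Cartier-operator characterization of k-projective sequences: a is k-projective iff
there are a positive integer d, sequences A y l (with A 0 1 = a) and matrices C j y over K
such that applying the Cartier operator (b n) to (b (k*n+j)) to the level-y vector of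
sequences gives C j y times the level-(y+1) vector. -/
theorem kProjective_iff_cartier {K : Type*} [Field K] {k : ℕ} (hk : 2 ≤ k) (a : ℕ → K) :
    kProjective k K a ↔
      ∃ d : ℕ, ∃ hd : 0 < d, ∃ A : ℕ → Fin d → (ℕ → K),
        ∃ C : ℕ → ℕ → Matrix (Fin d) (Fin d) K,
          A 0 ⟨0, hd⟩ = a ∧
          ∀ j < k, ∀ y : ℕ, ∀ l : Fin d, ∀ n : ℕ,
            A y l (k * n + j) = ∑ m : Fin d, C j y l m * A (y + 1) m n := by
  classical
  constructor
  · rintro ⟨d, hg⟩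
    choose g hgspec using hg
    set V : ℕ → Submodule K (ℕ → K) := levelSpan K k a with hV
    -- each V y is finite dimensional with finrank ≤ d
    have hVle : ∀ y, V y ≤ Submodule.span K (Set.range (g y)) := by
      intro y
      rw [hV, levelSpan, Submodule.span_le]
      rintro _ ⟨j, hj, rfl⟩
      exact hgspec y j hj
    have hfd : ∀ y, FiniteDimensional K (V y) := by
      intro y
      have : FiniteDimensional K (Submodule.span K (Set.range (g y))) :=
        FiniteDimensional.span_of_finite K (Set.finite_range _)
      exact Submodule.finiteDimensional_of_le (hVle y)
    have hrk : ∀ y, Module.finrank K (V y) ≤ d := by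
      intro y
      have h1 : FiniteDimensional K (Submodule.span K (Set.range (g y))) :=
        FiniteDimensional.span_of_finite K (Set.finite_range _)
      refine le_trans (Submodule.finrank_mono (hVle y)) ?_
      have := finrank_range_le_card (R := K) (g y)
      simpa [Set.finrank, Fintype.card_fin] using this
    set D := d + 1 with hD
    have hd : 0 < D := Nat.succ_pos d
    -- padded basis families
    have hB : ∀ y, ∃ B : Fin D → (ℕ → K),
        (∀ l, B l ∈ V y) ∧ V y ≤ Submodule.span K (Set.range B) := by
      intro y
      haveI := hfd y
      set b := Module.finBasis K (V y) with hb
      have hr : Module.finrank K (V y) ≤ D := le_trans (hrk y) (Nat.le_succ d)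
      refine ⟨fun l => if h : (l : ℕ) < Module.finrank K (V y) then (b ⟨l, h⟩ : ℕ → K) else 0,
        ?_, ?_⟩
      · intro l
        by_cases h : (l : ℕ) < Module.finrank K (V y)
        · simp only [dif_pos h]; exact (b ⟨(l : ℕ), h⟩).2
        · simp only [dif_neg h]; exact (V y).zero_mem
      · intro v hv
        -- v is in the span of the coerced basis vectors
        have hvspan : v ∈ Submodule.span K (Subtype.val '' Set.range b) := by
          have : Submodule.span K (Subtype.val '' Set.range b) =
              Submodule.map (V y).subtype (Submodule.span K (Set.range b)) := by
            rw [Submodule.map_span]; rfl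
          rw [this, b.span_eq, Submodule.map_subtype_top]
          exact hv
        refine Submodule.span_mono ?_ hvspan
        rintro _ ⟨_, ⟨i, rfl⟩, rfl⟩
        refine ⟨⟨(i : ℕ), lt_of_lt_of_le i.2 hr⟩, ?_⟩
        simp only [dif_pos (show ((⟨(i : ℕ), lt_of_lt_of_le i.2 hr⟩ : Fin D) : ℕ) <
          Module.finrank K (V y) from i.2)]
    choose B hBmem hBspan using hB
    -- the family A
    set A : ℕ → Fin D → (ℕ → K) := fun y =>
      Nat.rec (fun l => if l = (⟨0, hd⟩ : Fin D) then a else 0) (fun y _ => B (y + 1)) y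
      with hA
    have hA0 : A 0 = fun l => if l = (⟨0, hd⟩ : Fin D) then a else 0 := rfl
    have hAs : ∀ y, A (y + 1) = B (y + 1) := fun y => rfl
    have hAmem : ∀ y l, A y l ∈ V y := by
      intro y l
      cases y with
      | zero =>
        rw [hA0]
        by_cases h : l = (⟨0, hd⟩ : Fin D)
        · simp only [if_pos h]; exact a_mem_levelSpan a
        · simp only [if_neg h]; exact (V 0).zero_mem
      | succ y => rw [hAs]; exact hBmem (y + 1) l
    -- existence of coefficients
    have hex : ∀ j, j < k → ∀ y l, ∃ c : Fin D → K,
        (∑ m, c m • A (y + 1) m) = cartierL K k j (A y l) := by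
      intro j hj y l
      have h1 : cartierL K k j (A y l) ∈ V (y + 1) :=
        cartier_levelSpan a hj y (hAmem y l)
      have h2 : cartierL K k j (A y l) ∈ Submodule.span K (Set.range (A (y + 1))) := by
        rw [hAs]; exact hBspan (y + 1) h1
      exact (Submodule.mem_span_range_iff_exists_fun K).mp h2
    refine ⟨D, hd, A, fun j y => Matrix.of fun l m =>
        if h : j < k then Classical.choose (hex j h y l) m else 0, ?_, ?_⟩
    · rw [hA0]; simp
    · intro j hj y l n
      have hc := Classical.choose_spec (hex j hj y l)
      have := congrFun hc n
      simp only [Finset.sum_apply, Pi.smul_apply, smul_eq_mul, cartierL,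
        LinearMap.funLeft_apply] at this
      rw [show A y l (k * n + j) = cartierL K k j (A y l) n from rfl]
      simp only [cartierL, LinearMap.funLeft_apply]
      rw [← this]
      refine Finset.sum_congr rfl fun m _ => ?_
      simp [Matrix.of_apply, dif_pos hj]
  · rintro ⟨d, hd, A, C, hA0, hrec⟩
    refine ⟨d, fun e => ⟨A e, ?_⟩⟩
    induction e with
    | zero =>
      intro j hj
      rw [pow_zero] at hj
      have hj0 : j = 0 := by omega
      subst hj0
      have : (fun n => a (1 * n + 0)) = A 0 ⟨0, hd⟩ := by
        funext n; rw [hA0]; simp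
      rw [pow_zero, this]
      exact Submodule.subset_span ⟨⟨0, hd⟩, rfl⟩
    | succ e ih =>
      intro j hj
      have hke : 0 < k ^ e := pow_pos (by omega) e
      set s := j % k ^ e with hs
      set r := j / k ^ e with hr
      have hsr : k ^ e * r + s = j := Nat.div_add_mod j (k ^ e)
      have hslt : s < k ^ e := Nat.mod_lt _ hke
      have hrlt : r < k := by
        rw [hr]
        apply Nat.div_lt_of_lt_mul
        rw [pow_succ] at hj
        exact hj
      have hmem := ih s hslt
      obtain ⟨c, hc⟩ := (Submodule.mem_span_range_iff_exists_fun K).mp hmem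
      rw [Submodule.mem_span_range_iff_exists_fun]
      refine ⟨fun m => ∑ l, c l * C r e l m, ?_⟩
      funext n
      have key : a (k ^ (e + 1) * n + j) = ∑ l, c l * A e l (k * n + r) := by
        have h1 : k ^ (e + 1) * n + j = k ^ e * (k * n + r) + s := by
          rw [← hsr]; ring
        have h2 := congrFun hc (k * n + r)
        simp only [Finset.sum_apply, Pi.smul_apply, smul_eq_mul] at h2
        rw [h1, ← h2]
      simp only [Finset.sum_apply, Pi.smul_apply, smul_eq_mul]
      have step : ∑ l, c l * A e l (k * n + r) =
          ∑ l, ∑ m, c l * (C r e l m * A (e + 1) m n) := by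
        refine Finset.sum_congr rfl fun l _ => ?_
        rw [hrec r hrlt e l n, Finset.mul_sum]
      rw [key, step, Finset.sum_comm]
      refine Finset.sum_congr rfl fun m _ => ?_
      rw [Finset.sum_mul]
      refine Finset.sum_congr rfl fun l _ => ?_
      ring
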